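/- Fix b ≥ 5 odd, q = b/2, and ζ > 0. The arc Γ_ζ(t) = (√(t^b + ζ), t), t ≥ 0, satisfies, for all 0 < t̄ < t: L(Γ_ζ|_{[t̄, t]}) − |Γ_ζ(t̄) − Γ_ζ(t)| ≤ (1/2) q² (q−1) t^{b−1} (1 − t̄/t)². -/

import Mathlib

open Real Set Filter MeasureTheory intervalIntegral

lemma le_of_sq_le_sq' {a b : ℝ} (hb : 0 ≤ b) (h : a^2 ≤ b^2) : a ≤ b := by
  nlinarith [sq_nonneg (a + b), sq_nonneg (a - b)]

lemma tangent_line (x p : ℝ) (hx : 0 ≤ x) (hp : 0 ≤ p) :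
    Real.sqrt (1 + x^2) ≤ (1 + p*x)/Real.sqrt (1+p^2) + (x-p)^2/2 := by
  have hc0 : (0:ℝ) < 1 + p^2 := by positivity
  have hc : (1:ℝ) ≤ Real.sqrt (1+p^2) := by
    have := Real.sqrt_le_sqrt (show (1:ℝ) ≤ 1+p^2 by nlinarith)
    rwa [Real.sqrt_one] at this
  have hcpos : (0:ℝ) < Real.sqrt (1+p^2) := by linarith
  have key : Real.sqrt (1+x^2) * Real.sqrt (1+p^2) ≤ (1 + p*x) + (x-p)^2/2 := by
    rw [← Real.sqrt_mul (by positivity)]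
    apply le_of_sq_le_sq' (by nlinarith)
    rw [Real.sq_sqrt (by positivity)]
    nlinarith [sq_nonneg (x-p), mul_nonneg hp hx, sq_nonneg ((x-p)^2)]
  rw [← sub_le_iff_le_add, le_div_iff₀ hcpos]
  nlinarith [sq_nonneg (x-p)]

lemma chord_lb (a e p : ℝ) (ha : 0 ≤ a) (he : 0 ≤ e) (hp : 0 ≤ p) :
    (a + p*e)/Real.sqrt (1+p^2) ≤ Real.sqrt (e^2 + a^2) := by
  have hcpos : (0:ℝ) < Real.sqrt (1+p^2) := Real.sqrt_pos.mpr (by positivity)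
  rw [div_le_iff₀ hcpos, ← Real.sqrt_mul (by positivity)]
  exact Real.le_sqrt_of_sq_le (by nlinarith [sq_nonneg (p*a - e)])

lemma key_poly (q x z : ℝ) (hq : 5/2 ≤ q) (hx : 0 ≤ x) (hz : 0 ≤ z) :
    ((q-1)*x + (2*q-1)*z) * Real.sqrt x ≤ 2*(q-1)*((x+z)*Real.sqrt (x+z)) := by
  have ha : (3:ℝ)/2 ≤ q - 1 := by linarith
  have ha0 : (0:ℝ) ≤ q - 1 := by linarith
  apply le_of_sq_le_sq'
  · have : (0:ℝ) ≤ (x+z)*Real.sqrt (x+z) := by positivity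
    nlinarith
  have h1 : (((q-1)*x + (2*q-1)*z) * Real.sqrt x)^2 = ((q-1)*x + (2*q-1)*z)^2 * x := by
    rw [mul_pow, Real.sq_sqrt hx]
  have h2 : (2*(q-1)*((x+z)*Real.sqrt (x+z)))^2 = 4*(q-1)^2 * (x+z)^3 := by
    rw [mul_pow, mul_pow, mul_pow, Real.sq_sqrt (by positivity)]; ring
  rw [h1, h2]
  have h82 : (0:ℝ) ≤ 8*(q-1)^2 - 2*(q-1) := by nlinarith
  have h841 : (0:ℝ) ≤ 8*(q-1)^2 - 4*(q-1) - 1 := by nlinarith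
  nlinarith [mul_nonneg h82 (mul_nonneg (mul_nonneg hx hx) hz),
    mul_nonneg h841 (mul_nonneg hx (mul_nonneg hz hz)),
    mul_nonneg (sq_nonneg (q-1)) (mul_nonneg (mul_nonneg hz hz) hz),
    mul_nonneg (sq_nonneg (q-1)) (mul_nonneg (mul_nonneg hx hx) hx)]

theorem stmt6 (b : ℕ) (hb : 5 ≤ b) (hodd : Odd b) (q : ℝ) (hq : q = (b : ℝ) / 2)
    (ζ : ℝ) (hζ : 0 < ζ) (tb t : ℝ) (h0 : 0 < tb) (htt : tb < t) :
    (∫ s in tb..t, Real.sqrt (1 + (deriv (fun u : ℝ => Real.sqrt (u ^ b + ζ)) s) ^ 2))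
        - Real.sqrt ((Real.sqrt (tb ^ b + ζ) - Real.sqrt (t ^ b + ζ)) ^ 2 + (tb - t) ^ 2)
      ≤ (1/2) * q ^ 2 * (q - 1) * t ^ (b - 1) * (1 - tb / t) ^ 2 := by
  obtain ⟨r, rfl⟩ : ∃ r, b = 2*r+5 := by
    obtain ⟨k, hk⟩ := hodd; exact ⟨k - 2, by omega⟩
  rw [show 2*r+5-1 = 2*r+4 from by omega]
  have ht0 : (0:ℝ) < t := h0.trans htt
  have htbt : tb ≤ t := htt.le
  have hq5 : (5:ℝ)/2 ≤ q := by
    rw [hq]; push_cast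
    have : (0:ℝ) ≤ (r:ℝ) := Nat.cast_nonneg r
    linarith
  have hq0 : (0:ℝ) < q := by linarith
  have hq1 : (0:ℝ) ≤ q - 1 := by linarith
  set f : ℝ → ℝ := fun u : ℝ => Real.sqrt (u ^ (2*r+5) + ζ) with hf
  set D : ℝ → ℝ := fun u : ℝ => q * u^(2*r+4) / Real.sqrt (u^(2*r+5) + ζ) with hD
  have hX : ∀ u : ℝ, 0 < u → 0 < u^(2*r+5) + ζ := fun u hu => by positivity
  have hsq : ∀ u : ℝ, 0 < u → 0 < Real.sqrt (u^(2*r+5) + ζ) :=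
    fun u hu => Real.sqrt_pos.mpr (hX u hu)
  -- derivative of f
  have hderiv : ∀ u : ℝ, 0 < u → HasDerivAt f (D u) u := by
    intro u hu
    have h1 : HasDerivAt (fun x : ℝ => x^(2*r+5) + ζ) ((2*r+5:ℕ) * u^(2*r+4)) u := by
      have := (hasDerivAt_pow (2*r+5) u).add_const ζ
      rwa [show 2*r+5-1 = 2*r+4 from by omega] at this
    have h2 := h1.sqrt (ne_of_gt (hX u hu))
    convert h2 using 1
    rw [hD, hq]
    have : Real.sqrt (u^(2*r+5) + ζ) ≠ 0 := ne_of_gt (hsq u hu)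
    field_simp
  -- D is nonneg on positives
  have hDnn : ∀ u : ℝ, 0 < u → 0 ≤ D u := by
    intro u hu; rw [hD]; positivity
  -- monotonicity of D (algebraic)
  have hDmono : ∀ s : ℝ, 0 < s → s ≤ t → D s ≤ D t := by
    intro s hs hst
    rw [hD]
    simp only
    rw [div_le_div_iff₀ (hsq s hs) (hsq t ht0)]
    have p1 : s^(2*r+3) ≤ t^(2*r+3) := pow_le_pow_left₀ hs.le hst _
    have p2 : s^(2*r+5) ≤ t^(2*r+5) := pow_le_pow_left₀ hs.le hst _
    have core : s^(2*r+4) * Real.sqrt (t^(2*r+5)+ζ) ≤ t^(2*r+4) * Real.sqrt (s^(2*r+5)+ζ) := by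
      apply le_of_sq_le_sq' (by positivity)
      rw [mul_pow, mul_pow, Real.sq_sqrt (hX t ht0).le, Real.sq_sqrt (hX s hs).le,
        show ∀ x:ℝ, (x^(2*r+4))^2 = x^(2*r+5) * x^(2*r+3) from fun x => by ring,
        show ∀ x:ℝ, (x^(2*r+4))^2 = x^(2*r+5) * x^(2*r+3) from fun x => by ring]
      nlinarith [mul_le_mul p2 p1 (by positivity) (by positivity),
        mul_le_mul_of_nonneg_left p1 (by positivity : (0:ℝ) ≤ s^(2*r+5)*t^(2*r+5)), hζ.le]
    rw [mul_assoc, mul_assoc]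
    exact mul_le_mul_of_nonneg_left core hq0.le
  -- derivative of D
  set DD : ℝ → ℝ := fun u : ℝ => q * u^(2*r+3) * ((q-1)*u^(2*r+5) + (2*q-1)*ζ) /
      ((u^(2*r+5)+ζ) * Real.sqrt (u^(2*r+5)+ζ)) with hDD
  have hderivD : ∀ u : ℝ, 0 < u → HasDerivAt D (DD u) u := by
    intro u hu
    have hN : HasDerivAt (fun x : ℝ => q * x^(2*r+4)) (q * ((2*r+4:ℕ) * u^(2*r+3))) u := by
      have := (hasDerivAt_pow (2*r+4) u).const_mul q
      rwa [show 2*r+4-1 = 2*r+3 from by omega] at this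
    have h2 := hN.div (hderiv u hu) (ne_of_gt (hsq u hu))
    refine h2.congr_deriv ?_
    simp only [hDD, hD, hf]
    rw [hq]
    push_cast
    set S := Real.sqrt (u^(2*r+5) + ζ) with hS
    have hS0 : S ≠ 0 := ne_of_gt (hsq u hu)
    have hz : ζ = S^2 - u^(2*r+5) := by rw [hS, Real.sq_sqrt (hX u hu).le]; ring
    rw [hz]
    field_simp
    ring
  -- bound on DD
  set M : ℝ := 2*(q-1) * Real.sqrt (t^(2*r+1)) with hM
  have hM0 : 0 ≤ M := by rw [hM]; positivity
  have hDDle : ∀ u : ℝ, 0 < u → u ≤ t → DD u ≤ q * M := by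
    intro u hu hut
    have hXu := hX u hu
    rw [hDD]
    simp only
    rw [div_le_iff₀ (by positivity)]
    have hpoly := key_poly q (u^(2*r+5)) ζ hq5 (by positivity) hζ.le
    have hid : u^(2*r+3) = Real.sqrt (u^(2*r+1)) * Real.sqrt (u^(2*r+5)) := by
      rw [← Real.sqrt_mul (by positivity),
        show u^(2*r+1)*u^(2*r+5) = (u^(2*r+3))^2 from by ring,
        Real.sqrt_sq (by positivity)]
    have hmonot : Real.sqrt (u^(2*r+1)) ≤ Real.sqrt (t^(2*r+1)) :=
      Real.sqrt_le_sqrt (pow_le_pow_left₀ hu.le hut _)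
    calc q * u^(2*r+3) * ((q-1)*u^(2*r+5) + (2*q-1)*ζ)
        = q * Real.sqrt (u^(2*r+1)) *
            (((q-1)*u^(2*r+5) + (2*q-1)*ζ) * Real.sqrt (u^(2*r+5))) := by rw [hid]; ring
      _ ≤ q * Real.sqrt (u^(2*r+1)) *
            (2*(q-1)*((u^(2*r+5)+ζ)*Real.sqrt (u^(2*r+5)+ζ))) :=
          mul_le_mul_of_nonneg_left hpoly (by positivity)
      _ ≤ q * Real.sqrt (t^(2*r+1)) *
            (2*(q-1)*((u^(2*r+5)+ζ)*Real.sqrt (u^(2*r+5)+ζ))) := by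
          apply mul_le_mul_of_nonneg_right (mul_le_mul_of_nonneg_left hmonot hq0.le)
          positivity
      _ = q * M * ((u^(2*r+5)+ζ)*Real.sqrt (u^(2*r+5)+ζ)) := by rw [hM]; ring
  -- MVT bound
  have hMVT : ∀ s ∈ Icc tb t, D t - D s ≤ q * M * (t - s) := by
    have hmono : MonotoneOn (fun u => q*M*u - D u) (Icc tb t) := by
      have hs1 : ∀ u ∈ Icc tb t, HasDerivAt (fun u => q*M*u - D u) (q*M - DD u) u := by
        intro u hu
        have h1 : HasDerivAt (fun u : ℝ => q*M*u) (q*M) u := by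
          simpa using (hasDerivAt_id u).const_mul (q*M)
        exact h1.sub (hderivD u (h0.trans_le hu.1))
      apply monotoneOn_of_deriv_nonneg (convex_Icc tb t)
      · intro u hu
        exact ((hs1 u hu).continuousAt).continuousWithinAt
      · intro u hu
        rw [interior_Icc] at hu
        exact ((hs1 u (Ioo_subset_Icc_self hu)).differentiableAt).differentiableWithinAt
      · intro u hu
        rw [interior_Icc] at hu
        rw [(hs1 u (Ioo_subset_Icc_self hu)).deriv]
        have := hDDle u (h0.trans hu.1) hu.2.le
        linarith
    intro s hs
    have := hmono hs (right_mem_Icc.mpr htbt) hs.2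
    simp only at this
    linarith
  -- bound on D t
  have hDt : D t ≤ q * Real.sqrt (t^(2*r+3)) := by
    rw [hD]
    simp only
    rw [div_le_iff₀ (hsq t ht0)]
    have h1 : Real.sqrt (t^(2*r+5)) ≤ Real.sqrt (t^(2*r+5)+ζ) :=
      Real.sqrt_le_sqrt (by linarith)
    have hid : (t:ℝ)^(2*r+4) = Real.sqrt (t^(2*r+3)) * Real.sqrt (t^(2*r+5)) := by
      rw [← Real.sqrt_mul (by positivity),
        show t^(2*r+3)*t^(2*r+5) = (t^(2*r+4))^2 from by ring,
        Real.sqrt_sq (by positivity)]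
    calc q * t^(2*r+4) = q * Real.sqrt (t^(2*r+3)) * Real.sqrt (t^(2*r+5)) := by
          rw [hid]; ring
      _ ≤ q * Real.sqrt (t^(2*r+3)) * Real.sqrt (t^(2*r+5)+ζ) :=
          mul_le_mul_of_nonneg_left h1 (by positivity)
      _ = q * Real.sqrt (t^(2*r+3)) * Real.sqrt (t^(2*r+5)+ζ) := rfl
  -- key pointwise bound
  set E : ℝ := q^2*(q-1)*t^(2*r+2) with hE
  have hkey : ∀ s ∈ Icc tb t, (D s - D t)^2 ≤ 2*E*(t-s) := by
    intro s hs
    have hs0 : 0 < s := h0.trans_le hs.1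
    have h1 : 0 ≤ D t - D s := sub_nonneg.mpr (hDmono s hs0 hs.2)
    have h2 : D t - D s ≤ q*M*(t-s) := hMVT s hs
    have h4 : 0 ≤ D s := hDnn s hs0
    have hts : 0 ≤ t - s := by linarith [hs.2]
    have hprod : Real.sqrt (t^(2*r+1)) * Real.sqrt (t^(2*r+3)) = t^(2*r+2) := by
      rw [← Real.sqrt_mul (by positivity),
        show t^(2*r+1)*t^(2*r+3) = (t^(2*r+2))^2 from by ring,
        Real.sqrt_sq (by positivity)]
    have hb0 : 0 ≤ q*M*(t-s) := mul_nonneg (mul_nonneg hq0.le hM0) hts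
    calc (D s - D t)^2 = (D t - D s)*(D t - D s) := by ring
      _ ≤ (q*M*(t-s)) * (D t) := mul_le_mul h2 (by linarith) h1 hb0
      _ ≤ (q*M*(t-s)) * (q*Real.sqrt (t^(2*r+3))) := mul_le_mul_of_nonneg_left hDt hb0
      _ = 2*(q^2*(q-1)*(Real.sqrt (t^(2*r+1)) * Real.sqrt (t^(2*r+3))))*(t-s) := by
          rw [hM]; ring
      _ = 2*E*(t-s) := by rw [hprod, hE]
  -- FTC
  have hcontD : ContinuousOn D (uIcc tb t) := by
    rw [uIcc_of_le htbt]
    intro u hu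
    exact ((hderivD u (h0.trans_le hu.1)).continuousAt).continuousWithinAt
  have hintD : IntervalIntegrable D volume tb t := hcontD.intervalIntegrable
  have hFTC : (∫ s in tb..t, D s) = f t - f tb := by
    apply intervalIntegral.integral_eq_sub_of_hasDerivAt _ hintD
    intro x hx
    rw [uIcc_of_le htbt] at hx
    exact hderiv x (h0.trans_le hx.1)
  set p := D t with hp
  have hp0 : 0 ≤ p := hDnn t ht0
  set c := Real.sqrt (1+p^2) with hc
  have hc0 : 0 < c := by rw [hc]; positivity
  -- pointwise integrand bound
  have hptwise : ∀ s ∈ Icc tb t,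
      Real.sqrt (1 + (D s)^2) ≤ 1/c + (p/c)*D s + E*(t-s) := by
    intro s hs
    have h1 := tangent_line (D s) p (hDnn s (h0.trans_le hs.1)) hp0
    have h2 := hkey s hs
    have h3 : (1 + p*D s)/c = 1/c + (p/c)*D s := by ring
    rw [← hc] at h1
    linarith
  -- integrability
  have hint1 : IntervalIntegrable (fun s => Real.sqrt (1 + (D s)^2)) volume tb t := by
    apply ContinuousOn.intervalIntegrable
    exact (continuousOn_const.add (hcontD.pow 2)).sqrt
  have i1 : IntervalIntegrable (fun _ : ℝ => 1/c) volume tb t := intervalIntegrable_const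
  have i2 : IntervalIntegrable (fun s => (p/c)*D s) volume tb t := hintD.const_mul _
  have i3 : IntervalIntegrable (fun s : ℝ => E*(t-s)) volume tb t :=
    (continuous_const.mul (continuous_const.sub continuous_id)).intervalIntegrable tb t
  have hint2 : IntervalIntegrable (fun s => 1/c + (p/c)*D s + E*(t-s)) volume tb t :=
    (i1.add i2).add i3
  have hIle : (∫ s in tb..t, Real.sqrt (1 + (D s)^2))
      ≤ ∫ s in tb..t, (1/c + (p/c)*D s + E*(t-s)) :=
    intervalIntegral.integral_mono_on htbt hint1 hint2 hptwise
  have hIti : (∫ s in tb..t, (t - s)) = (t-tb)^2/2 := by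
    rw [intervalIntegral.integral_sub intervalIntegrable_const intervalIntegrable_id,
      intervalIntegral.integral_const, integral_id]
    simp only [smul_eq_mul]
    ring
  have hIval : (∫ s in tb..t, (1/c + (p/c)*D s + E*(t-s)))
      = (t-tb)*(1/c) + (p/c)*(f t - f tb) + E*((t-tb)^2/2) := by
    rw [intervalIntegral.integral_add (i1.add i2) i3,
      intervalIntegral.integral_add i1 i2,
      intervalIntegral.integral_const, intervalIntegral.integral_const_mul, hFTC,
      intervalIntegral.integral_const_mul, hIti]
    simp only [smul_eq_mul]
    try ring
  -- chord lower bound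
  have hfle : f tb ≤ f t := by
    rw [hf]
    exact Real.sqrt_le_sqrt (by nlinarith [pow_le_pow_left₀ h0.le htbt (2*r+5)])
  have hchord : (t-tb)*(1/c) + (p/c)*(f t - f tb)
      ≤ Real.sqrt ((f tb - f t)^2 + (tb-t)^2) := by
    have hcb := chord_lb (t - tb) (f t - f tb) p (by linarith) (by linarith) hp0
    rw [← hc] at hcb
    rw [show (f tb - f t)^2 = (f t - f tb)^2 from by ring,
      show (tb-t)^2 = (t-tb)^2 from by ring]
    calc (t-tb)*(1/c) + (p/c)*(f t - f tb) = ((t-tb) + p*(f t - f tb))/c := by ring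
      _ ≤ _ := hcb
  -- replace deriv in the goal
  have hIeq : (∫ s in tb..t, Real.sqrt (1 + (deriv f s) ^ 2))
      = ∫ s in tb..t, Real.sqrt (1 + (D s)^2) := by
    refine intervalIntegral.integral_congr fun s hs => ?_
    rw [uIcc_of_le htbt] at hs
    simp only [(hderiv s (h0.trans_le hs.1)).deriv]
  have hRHS : (1/2)*q^2*(q-1)*t^(2*r+4)*(1 - tb/t)^2 = E*((t-tb)^2/2) := by
    rw [hE]
    field_simp
    ring
  rw [show Real.sqrt (tb ^ (2*r+5) + ζ) = f tb from rfl,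
    show Real.sqrt (t ^ (2*r+5) + ζ) = f t from rfl]
  linarith [hIle, hIval, hchord, hIeq]
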